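/- A proper rational transfer function G(s) = b(s)/a(s) with a Hurwitz denominator and a zero z with Re z > 0 (non-minimum phase) has a step response that satisfies ∫₀^∞ e^{−z t} y(t) dt = 0 whenever G(z) is defined, where y is the step response; in particular if the DC gain G(0) > 0, the step response y cannot be nonnegative for all t ≥ 0 unless it is identically zero. -/
import Mathlib


open MeasureTheory

/-- Non-minimum phase zero constraint on the step response: if `G = b/a` is proper
with Hurwitz denominator and `z > 0` is a real right-half-plane zero of `G`, then the
step response `y` (characterized by its Laplace transform `G(s)/s`) satisfies
`∫₀^∞ e^{−z t} y(t) dt = 0`; in particular if `G(0) > 0` then `y` cannot be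
nonnegative on `(0, ∞)` unless it is identically zero there. -/
theorem nonminimum_phase_step_response_integral
    (a b : Polynomial ℝ)
    (hproper : b.degree ≤ a.degree)
    (hHurwitz : ∀ w : ℂ, (a.map (algebraMap ℝ ℂ)).IsRoot w → w.re < 0)
    (z : ℝ) (hz : 0 < z) (hzzero : b.eval z = 0) (hza : a.eval z ≠ 0)
    (y : ℝ → ℝ) (hyc : Continuous y)
    (hint : ∀ s : ℝ, 0 < s →
      IntegrableOn (fun t => Real.exp (-s * t) * y t) (Set.Ioi 0))
    (hlaplace : ∀ s : ℝ, 0 < s →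
      ∫ t in Set.Ioi (0 : ℝ), Real.exp (-s * t) * y t = b.eval s / (a.eval s * s)) :
    (∫ t in Set.Ioi (0 : ℝ), Real.exp (-z * t) * y t = 0) ∧
    (0 < b.eval 0 / a.eval 0 →
      (∀ t : ℝ, 0 < t → 0 ≤ y t) → ∀ t : ℝ, 0 < t → y t = 0) := by
  have hI : ∫ t in Set.Ioi (0 : ℝ), Real.exp (-z * t) * y t = 0 := by
    rw [hlaplace z hz, hzzero, zero_div]
  refine ⟨hI, fun _ hnn t ht => ?_⟩
  set f : ℝ → ℝ := fun t => Real.exp (-z * t) * y t with hf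
  have hnnf : 0 ≤ᵐ[volume.restrict (Set.Ioi (0:ℝ))] f := by
    filter_upwards [ae_restrict_mem measurableSet_Ioi] with x hx
    exact mul_nonneg (Real.exp_pos _).le (hnn x hx)
  have hae : f =ᵐ[volume.restrict (Set.Ioi (0:ℝ))] 0 :=
    (integral_eq_zero_iff_of_nonneg_ae hnnf (hint z hz)).mp hI
  have hcf : Continuous f := (Real.continuous_exp.comp (continuous_const.mul continuous_id)).mul hyc
  have heq : Set.EqOn f 0 (Set.Ioi 0) :=
    Measure.eqOn_open_of_ae_eq hae isOpen_Ioi hcf.continuousOn continuous_const.continuousOn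
  have := heq ht
  simp only [hf, Pi.zero_apply, mul_eq_zero] at this
  rcases this with h | h
  · exact absurd h (Real.exp_ne_zero _)
  · exact h
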